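/- Let R be a commutative ring and D an additive R-linear category with weak kernels and weak cokernels. If a contravariant functor M : D → Mod-R is weak left exact and finitely presented, then M is isomorphic to a direct summand of a representable functor D(-,D). -/

import Mathlib

/-!
Statement 3.
Let `R` be a commutative ring and `D` an additive `R`-linear category with weak kernels and
weak cokernels.  If a contravariant functor `M : D → Mod-R` is weak left exact and finitely
presented, then `M` is isomorphic to a direct summand of a representable functor `D(-,D₀)`.
-/

open CategoryTheory Opposite

universe w v u

namespace Paper

variable (R : Type w) [CommRing R] (D : Type u) [Category.{v} D] [Preadditive D]
  [CategoryTheory.Linear R D]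

instance oppositeHomModule (X Y : Dᵒᵖ) : Module R (X ⟶ Y) where
  smul r f := (r • f.unop).op
  one_smul f := Quiver.Hom.unop_inj (one_smul _ _)
  mul_smul r s f := Quiver.Hom.unop_inj (mul_smul _ _ _)
  smul_zero r := Quiver.Hom.unop_inj (smul_zero _)
  smul_add r f g := Quiver.Hom.unop_inj (smul_add _ _ _)
  add_smul r s f := Quiver.Hom.unop_inj (add_smul _ _ _)
  zero_smul f := Quiver.Hom.unop_inj (zero_smul _ _)

instance oppositeLinear : CategoryTheory.Linear R Dᵒᵖ where
  smul_comp X Y Z r f g := by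
    exact Quiver.Hom.unop_inj (CategoryTheory.Linear.comp_smul _ _ _ g.unop r f.unop)
  comp_smul X Y Z f r g := by
    exact Quiver.Hom.unop_inj (CategoryTheory.Linear.smul_comp _ _ _ r g.unop f.unop)

variable {D}

/-- `X → Y → Z` is a weak kernel sequence, i.e. `D(-,X) → D(-,Y) → D(-,Z)` is exact. -/
def IsWeakKernelSeq {X Y Z : D} (f : X ⟶ Y) (g : Y ⟶ Z) : Prop :=
  ∀ (W : D) (w : W ⟶ Y), w ≫ g = 0 ↔ ∃ t : W ⟶ X, t ≫ f = w

/-- `X → Y → Z` is a weak cokernel sequence, i.e. `D(Z,W) → D(Y,W) → D(X,W)` is exact for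
every `W`. -/
def IsWeakCokernelSeq {X Y Z : D} (f : X ⟶ Y) (g : Y ⟶ Z) : Prop :=
  ∀ (W : D) (w : Y ⟶ W), f ≫ w = 0 ↔ ∃ t : Z ⟶ W, g ≫ t = w

/-- `D` has weak kernels. -/
def HasWeakKernels : Prop :=
  ∀ ⦃Y Z : D⦄ (g : Y ⟶ Z), ∃ (X : D) (f : X ⟶ Y), IsWeakKernelSeq f g

/-- `D` has weak cokernels. -/
def HasWeakCokernels : Prop :=
  ∀ ⦃X Y : D⦄ (f : X ⟶ Y), ∃ (Z : D) (g : Y ⟶ Z), IsWeakCokernelSeq f g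

/-- A contravariant functor `M : D → Mod-R` is weak left exact if it sends every weak
cokernel sequence `X → Y → Z` to an exact sequence `M(Z) → M(Y) → M(X)`. -/
def IsWeakLeftExact (M : Dᵒᵖ ⥤ ModuleCat.{v} R) : Prop :=
  ∀ ⦃X Y Z : D⦄ (f : X ⟶ Y) (g : Y ⟶ Z), IsWeakCokernelSeq f g →
    Function.Exact (M.map g.op) (M.map f.op)

/-- A `D`-module `M` is finitely presented if there is an exact sequence of functors
`D(-,C₀) → D(-,D₀) → M → 0`. -/
def IsFinitelyPresented (M : Dᵒᵖ ⥤ ModuleCat.{v} R) : Prop :=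
  ∃ (C₀ D₀ : D) (f : C₀ ⟶ D₀) (α : (linearYoneda R D).obj D₀ ⟶ M),
    (∀ X : Dᵒᵖ, Function.Surjective (α.app X)) ∧
    (∀ X : Dᵒᵖ, Function.Exact (((linearYoneda R D).map f).app X) (α.app X))

/-- `M` is isomorphic to a direct summand of a representable functor. -/
def IsSummandOfRepresentable (M : Dᵒᵖ ⥤ ModuleCat.{v} R) : Prop :=
  ∃ (D₀ : D) (s : M ⟶ (linearYoneda R D).obj D₀) (r : (linearYoneda R D).obj D₀ ⟶ M),
    s ≫ r = 𝟙 M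

theorem summand_of_representable_of_wle_fp
    (hwk : HasWeakKernels (D := D)) (hwc : HasWeakCokernels (D := D))
    (M : Dᵒᵖ ⥤ ModuleCat.{v} R) [M.Additive] [M.Linear R]
    (hwle : IsWeakLeftExact R M) (hfp : IsFinitelyPresented R M) :
    IsSummandOfRepresentable R M := by
  obtain ⟨C₀, D₀, f, α, hsurj, hexact⟩ := hfp
  obtain ⟨Z, g, hg⟩ := hwc f
  have hfg : f ≫ g = 0 := (hg Z g).mpr ⟨𝟙 Z, Category.comp_id g⟩
  -- naturality of α in explicit form
  have hnat : ∀ {X X' : D} (ψ : X' ⟶ X) (φ : X ⟶ D₀),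
      α.app (op X') (ψ ≫ φ) = M.map ψ.op (α.app (op X) φ) := by
    intro X X' ψ φ
    have h := congrFun (congrArg (fun (t : _ ⟶ _) => (t : _ → _)) (α.naturality ψ.op)) φ
    exact h
  -- the canonical element
  set m₀ : M.obj (op D₀) := α.app (op D₀) (𝟙 D₀) with hm₀
  have hαf : α.app (op C₀) f = 0 := by
    apply (hexact (op C₀) f).mpr
    exact ⟨𝟙 C₀, by show 𝟙 C₀ ≫ f = f; simp⟩
  have hMf : M.map f.op m₀ = 0 := by
    rw [hm₀, ← hnat f (𝟙 D₀), Category.comp_id, hαf]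
  obtain ⟨n, hn⟩ := (hwle f g hg m₀).mp hMf
  obtain ⟨(h : Z ⟶ D₀), hh⟩ := hsurj (op Z) n
  -- key computation
  have hcomp : ∀ (X : D) (φ : X ⟶ D₀),
      α.app (op X) (φ ≫ g ≫ h) = α.app (op X) φ := by
    intro X φ
    rw [← Category.assoc, hnat (φ ≫ g) h, hh]
    have e1 : (φ ≫ g).op = g.op ≫ φ.op := rfl
    have e2 : M.map (φ ≫ g).op n = M.map φ.op (M.map g.op n) := by
      rw [e1, M.map_comp]; rfl
    rw [e2, hn, hm₀, ← hnat φ (𝟙 D₀), Category.comp_id]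
  -- well-definedness
  have wd : ∀ (X : Dᵒᵖ) (φ φ' : X.unop ⟶ D₀), α.app X φ = α.app X φ' →
      φ ≫ g = φ' ≫ g := by
    intro X φ φ' hφ
    have h0 : α.app X (φ - φ') = 0 := by
      exact (map_sub (ConcreteCategory.hom (α.app X)) φ φ').trans (sub_eq_zero.mpr hφ)
    obtain ⟨(t : X.unop ⟶ C₀), ht⟩ := (hexact X (φ - φ')).mp h0
    have ht' : t ≫ f = φ - φ' := by exact ht
    have hz : (φ - φ') ≫ g = 0 := by
      rw [← ht', Category.assoc, hfg, Limits.comp_zero]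
    rw [← sub_eq_zero, ← Preadditive.sub_comp]
    exact hz
  -- preimage choice
  choose pre hpre using fun (X : Dᵒᵖ) (m : M.obj X) =>
    (show ∃ φ : X.unop ⟶ D₀, α.app X φ = m from hsurj X m)
  have hpre' : ∀ (X : Dᵒᵖ) (m : M.obj X) (φ : X.unop ⟶ D₀), α.app X φ = m →
      pre X m ≫ g = φ ≫ g := fun X m φ hφ => wd X _ _ ((hpre X m).trans hφ.symm)
  -- the splitting, componentwise
  let sapp : ∀ X : Dᵒᵖ, M.obj X ⟶ ((linearYoneda R D).obj D₀).obj X := fun X => ModuleCat.ofHom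
    { toFun := fun m => pre X m ≫ g ≫ h
      map_add' := by
        intro m m'
        show pre X (m + m') ≫ g ≫ h = pre X m ≫ g ≫ h + pre X m' ≫ g ≫ h
        rw [← Category.assoc, ← Category.assoc, ← Category.assoc,
          hpre' X (m + m') (pre X m + pre X m')
            ((map_add (ConcreteCategory.hom (α.app X)) (pre X m) (pre X m')).trans
              (congrArg₂ (· + ·) (hpre X m) (hpre X m'))),
          Preadditive.add_comp, Preadditive.add_comp]
      map_smul' := by
        intro r m
        show pre X (r • m) ≫ g ≫ h = r • (pre X m ≫ g ≫ h)
        rw [← Category.assoc, ← Category.assoc,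
          hpre' X (r • m) (r • pre X m) ((map_smul (ConcreteCategory.hom (α.app X)) r (pre X m)).trans
            (congrArg (r • ·) (hpre X m))),
          Linear.smul_comp, Linear.smul_comp] }
  have snat : ∀ {X X' : Dᵒᵖ} (ψ : X ⟶ X'),
      M.map ψ ≫ sapp X' = sapp X ≫ ((linearYoneda R D).obj D₀).map ψ := by
    intro X X' ψ
    ext m
    have key : pre X' (M.map ψ m) ≫ g = (ψ.unop ≫ pre X m) ≫ g :=
      hpre' X' (M.map ψ m) (ψ.unop ≫ pre X m)
        (by rw [hnat ψ.unop (pre X m), Quiver.Hom.op_unop, hpre X m])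
    show pre X' (M.map ψ m) ≫ g ≫ h = ((linearYoneda R D).obj D₀).map ψ (pre X m ≫ g ≫ h)
    have e3 : ((linearYoneda R D).obj D₀).map ψ (pre X m ≫ g ≫ h)
        = ψ.unop ≫ pre X m ≫ g ≫ h := by
      rfl
    rw [e3, ← Category.assoc, key, Category.assoc, Category.assoc]
  refine ⟨D₀, ⟨sapp, fun {X X'} ψ => snat ψ⟩, α, ?_⟩
  ext X m
  show α.app X (pre X m ≫ g ≫ h) = m
  have := hcomp X.unop (pre X m)
  rw [this, hpre X m]


end Paper
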